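/- arXiv:0704.2961 — 2 statements merged into one kernel-verified Lean document; each statement's English description precedes it below -/
import Mathlib

section
/- Each two-qubit reduced density matrix ρ_{AY} of |M₄⟩ is separable, i.e., it is a convex combination of product states. -/
open scoped BigOperators
open Polynomial

/-- ω = exp(2πi/3), a primitive third root of unity. -/
noncomputable def omega : ℂ := Complex.exp (2 * Real.pi * Complex.I / 3)

/-- The four-qubit state |M₄⟩, given by its amplitudes in the computational basis. -/
noncomputable def M4 : Fin 2 → Fin 2 → Fin 2 → Fin 2 → ℂ := fun a b c d =>
  (Real.sqrt 6 : ℂ)⁻¹ *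
    ((if (a, b, c, d) = (0, 0, 1, 1) ∨ (a, b, c, d) = (1, 1, 0, 0) then 1 else 0)
      + omega * (if (a, b, c, d) = (0, 1, 0, 1) ∨ (a, b, c, d) = (1, 0, 1, 0) then 1 else 0)
      + (starRingEnd ℂ) omega *
          (if (a, b, c, d) = (0, 1, 1, 0) ∨ (a, b, c, d) = (1, 0, 0, 1) then 1 else 0))

/-- Reduced density matrix on qubits A,B (tracing out C,D), sesquilinear in two states. -/
noncomputable def redAB (ψ φ : Fin 2 → Fin 2 → Fin 2 → Fin 2 → ℂ) :
    Matrix (Fin 2 × Fin 2) (Fin 2 × Fin 2) ℂ := fun p q =>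
  ∑ c : Fin 2, ∑ d : Fin 2, ψ p.1 p.2 c d * (starRingEnd ℂ) (φ q.1 q.2 c d)

/-- Reduced density matrix on qubits A,C (tracing out B,D). -/
noncomputable def redAC (ψ φ : Fin 2 → Fin 2 → Fin 2 → Fin 2 → ℂ) :
    Matrix (Fin 2 × Fin 2) (Fin 2 × Fin 2) ℂ := fun p q =>
  ∑ b : Fin 2, ∑ d : Fin 2, ψ p.1 b p.2 d * (starRingEnd ℂ) (φ q.1 b q.2 d)

/-- Reduced density matrix on qubits A,D (tracing out B,C). -/
noncomputable def redAD (ψ φ : Fin 2 → Fin 2 → Fin 2 → Fin 2 → ℂ) :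
    Matrix (Fin 2 × Fin 2) (Fin 2 × Fin 2) ℂ := fun p q =>
  ∑ b : Fin 2, ∑ c : Fin 2, ψ p.1 b c p.2 * (starRingEnd ℂ) (φ q.1 b c q.2)

noncomputable def rhoAB (ψ : Fin 2 → Fin 2 → Fin 2 → Fin 2 → ℂ) := redAB ψ ψ
noncomputable def rhoAC (ψ : Fin 2 → Fin 2 → Fin 2 → Fin 2 → ℂ) := redAC ψ ψ
noncomputable def rhoAD (ψ : Fin 2 → Fin 2 → Fin 2 → Fin 2 → ℂ) := redAD ψ ψ

open Kronecker ComplexOrder in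
/-- A two-qubit mixed state is separable if it is a finite convex combination of
tensor products of single-qubit density matrices. -/
def IsSeparableTwoQubit (σ : Matrix (Fin 2 × Fin 2) (Fin 2 × Fin 2) ℂ) : Prop :=
  ∃ (n : ℕ) (p : Fin n → ℝ) (σ₁ σ₂ : Fin n → Matrix (Fin 2) (Fin 2) ℂ),
    (∀ k, 0 ≤ p k) ∧ (∑ k, p k = 1) ∧
    (∀ k, (σ₁ k).PosSemidef ∧ (σ₁ k).trace = 1) ∧
    (∀ k, (σ₂ k).PosSemidef ∧ (σ₂ k).trace = 1) ∧
    σ = ∑ k, (p k : ℂ) • (σ₁ k ⊗ₖ σ₂ k)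

/-! ### Auxiliary facts about ω -/

lemma omega_re : omega.re = -(1/2) := by
  have h : (2 * Real.pi * Complex.I / 3 : ℂ) = ((2 * Real.pi / 3 : ℝ) : ℂ) * Complex.I := by
    push_cast; ring
  rw [omega, h, Complex.exp_ofReal_mul_I_re]
  have h2 : 2 * Real.pi / 3 = Real.pi - Real.pi / 3 := by ring
  rw [h2, Real.cos_pi_sub, Real.cos_pi_div_three]

lemma omega_im : omega.im = Real.sqrt 3 / 2 := by
  have h : (2 * Real.pi * Complex.I / 3 : ℂ) = ((2 * Real.pi / 3 : ℝ) : ℂ) * Complex.I := by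
    push_cast; ring
  rw [omega, h, Complex.exp_ofReal_mul_I_im]
  have h2 : 2 * Real.pi / 3 = Real.pi - Real.pi / 3 := by ring
  rw [h2, Real.sin_pi_sub, Real.sin_pi_div_three]

lemma omega_mul_conj : omega * (starRingEnd ℂ) omega = 1 := by
  have h3 : Real.sqrt 3 * Real.sqrt 3 = 3 := Real.mul_self_sqrt (by norm_num)
  apply Complex.ext <;>
    simp [Complex.mul_re, Complex.mul_im, omega_re, omega_im] <;> nlinarith [h3]

lemma omega_add_conj : omega + (starRingEnd ℂ) omega = -1 := by
  apply Complex.ext <;> simp [omega_re, omega_im] <;> norm_num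

lemma omega_sq_add_conj_sq :
    omega * omega + (starRingEnd ℂ) omega * (starRingEnd ℂ) omega = -1 := by
  have h := omega_add_conj
  have h1 := omega_mul_conj
  have h2 : (omega + (starRingEnd ℂ) omega) ^ 2 = 1 := by rw [h]; ring
  have h4 : omega * omega + (starRingEnd ℂ) omega * (starRingEnd ℂ) omega
      = (omega + (starRingEnd ℂ) omega) ^ 2 - 2 * (omega * (starRingEnd ℂ) omega) := by ring
  rw [h4, h2, h1]; ring

lemma sqrt6_inv : ((Real.sqrt 6 : ℂ))⁻¹ * ((Real.sqrt 6 : ℂ))⁻¹ = (6 : ℂ)⁻¹ := by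
  rw [← mul_inv]
  norm_cast
  rw [Real.mul_self_sqrt (by norm_num)]
  norm_num

lemma sqrt6_inv_sq : ((Real.sqrt 6 : ℂ))⁻¹ ^ 2 = (6:ℂ)⁻¹ := by
  rw [sq]; exact sqrt6_inv

/-! ### The common reduced density matrix -/

/-- All three two-qubit reductions of |M₄⟩ equal this matrix. -/
noncomputable def Rmat : Matrix (Fin 2 × Fin 2) (Fin 2 × Fin 2) ℂ := fun p q =>
  if p = q then (if p.1 = p.2 then 1/6 else 1/3)
  else if p.1 ≠ p.2 ∧ q.1 ≠ q.2 then -(1/6) else 0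

lemma rhoAB_eq : rhoAB M4 = Rmat := by
  funext p q
  obtain ⟨a, b⟩ := p; obtain ⟨c, d⟩ := q
  fin_cases a <;> fin_cases b <;> fin_cases c <;> fin_cases d <;>
      (simp only [rhoAB, redAB, M4, Rmat, Fin.sum_univ_two, Prod.mk.injEq, Fin.isValue]
       norm_num [map_mul, map_add, Complex.conj_conj]) <;>
    (ring_nf
     rw [sqrt6_inv_sq]
     first
       | linear_combination (1/3 : ℂ) * omega_mul_conj
       | linear_combination (1/6 : ℂ) * omega_sq_add_conj_sq
       | linear_combination (1/6 : ℂ) * omega_add_conj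
       | linear_combination (1/6 : ℂ) * omega_mul_conj
       | norm_num)

lemma rhoAC_eq : rhoAC M4 = Rmat := by
  funext p q
  obtain ⟨a, b⟩ := p; obtain ⟨c, d⟩ := q
  fin_cases a <;> fin_cases b <;> fin_cases c <;> fin_cases d <;>
      (simp only [rhoAC, redAC, M4, Rmat, Fin.sum_univ_two, Prod.mk.injEq, Fin.isValue]
       norm_num [map_mul, map_add, Complex.conj_conj]) <;>
    (ring_nf
     rw [sqrt6_inv_sq]
     first
       | linear_combination (1/3 : ℂ) * omega_mul_conj
       | linear_combination (1/6 : ℂ) * omega_sq_add_conj_sq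
       | linear_combination (1/6 : ℂ) * omega_add_conj
       | linear_combination (1/6 : ℂ) * omega_mul_conj
       | norm_num)

lemma rhoAD_eq : rhoAD M4 = Rmat := by
  funext p q
  obtain ⟨a, b⟩ := p; obtain ⟨c, d⟩ := q
  fin_cases a <;> fin_cases b <;> fin_cases c <;> fin_cases d <;>
      (simp only [rhoAD, redAD, M4, Rmat, Fin.sum_univ_two, Prod.mk.injEq, Fin.isValue]
       norm_num [map_mul, map_add, Complex.conj_conj]) <;>
    (ring_nf
     rw [sqrt6_inv_sq]
     first
       | linear_combination (1/3 : ℂ) * omega_mul_conj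
       | linear_combination (1/6 : ℂ) * omega_sq_add_conj_sq
       | linear_combination (1/6 : ℂ) * omega_add_conj
       | linear_combination (1/6 : ℂ) * omega_mul_conj
       | norm_num)

/-! ### An explicit separable decomposition of `Rmat` -/

open scoped ComplexOrder

lemma psd_smul {n : Type*} [Fintype n] {M : Matrix n n ℂ} (hM : M.PosSemidef)
    {c : ℝ} (hc : 0 ≤ c) : ((c : ℂ) • M).PosSemidef := by
  constructor
  · unfold Matrix.IsHermitian
    rw [Matrix.conjTranspose_smul, hM.1.eq]
    congr 1
    simp
  · intro x
    exact (hM.smul (show (0:ℂ) ≤ (c:ℂ) by exact_mod_cast hc)).2 x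

noncomputable def u1 : Fin 6 → Matrix (Fin 1) (Fin 2) ℂ :=
  ![!![1, 1], !![Complex.I, 1], !![-1, 1], !![-Complex.I, 1], !![1, 0], !![0, 1]]

noncomputable def u2 : Fin 6 → Matrix (Fin 1) (Fin 2) ℂ :=
  ![!![-1, 1], !![-Complex.I, 1], !![1, 1], !![Complex.I, 1], !![0, 1], !![1, 0]]

noncomputable def cf : Fin 6 → ℝ := ![1/2, 1/2, 1/2, 1/2, 1, 1]

noncomputable def sig1 : Fin 6 → Matrix (Fin 2) (Fin 2) ℂ :=
  fun k => ((cf k : ℝ) : ℂ) • ((u1 k).conjTranspose * u1 k)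

noncomputable def sig2 : Fin 6 → Matrix (Fin 2) (Fin 2) ℂ :=
  fun k => ((cf k : ℝ) : ℂ) • ((u2 k).conjTranspose * u2 k)

lemma cf_nonneg (k : Fin 6) : 0 ≤ cf k := by
  fin_cases k <;> norm_num [cf]

lemma sig1_psd (k : Fin 6) : (sig1 k).PosSemidef :=
  psd_smul (Matrix.posSemidef_conjTranspose_mul_self _) (cf_nonneg k)

lemma sig2_psd (k : Fin 6) : (sig2 k).PosSemidef :=
  psd_smul (Matrix.posSemidef_conjTranspose_mul_self _) (cf_nonneg k)

lemma sig1_trace (k : Fin 6) : (sig1 k).trace = 1 := by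
  fin_cases k <;>
    norm_num [sig1, u1, cf, Matrix.trace, Matrix.mul_apply, Matrix.conjTranspose_apply,
      Fin.sum_univ_two, Fin.sum_univ_one, Matrix.cons_val_succ, Complex.ext_iff]

lemma sig2_trace (k : Fin 6) : (sig2 k).trace = 1 := by
  fin_cases k <;>
    norm_num [sig2, u2, cf, Matrix.trace, Matrix.mul_apply, Matrix.conjTranspose_apply,
      Fin.sum_univ_two, Fin.sum_univ_one, Matrix.cons_val_succ, Complex.ext_iff]

open Kronecker in
lemma Rmat_decomp :
    Rmat = ∑ k : Fin 6, (((fun _ => (1/6 : ℝ)) k : ℝ) : ℂ) • (sig1 k ⊗ₖ sig2 k) := by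
  funext p q
  obtain ⟨a, b⟩ := p; obtain ⟨c, d⟩ := q
  fin_cases a <;> fin_cases b <;> fin_cases c <;> fin_cases d <;>
    · simp only [Rmat, sig1, sig2, u1, u2, cf, Matrix.sum_apply,
        Matrix.smul_apply, Matrix.kroneckerMap_apply, Matrix.mul_apply, Fin.sum_univ_succ, Finset.sum_empty, Fin.sum_univ_zero,
        Matrix.conjTranspose_apply, Fin.sum_univ_one, Prod.mk.injEq, Fin.isValue,
        Matrix.cons_val', Matrix.cons_val_zero, Matrix.cons_val_one, Matrix.head_cons,
        Matrix.cons_val_succ, Matrix.empty_val', Matrix.cons_val_fin_one, Matrix.head_fin_const]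
      norm_num [Complex.ext_iff]

lemma Rmat_separable : IsSeparableTwoQubit Rmat := by
  refine ⟨6, fun _ => 1/6, sig1, sig2, fun k => by norm_num, by simp,
    fun k => ⟨sig1_psd k, sig1_trace k⟩, fun k => ⟨sig2_psd k, sig2_trace k⟩, Rmat_decomp⟩

/-- Each two-qubit reduced density matrix ρ_{AY} of |M₄⟩ is separable. -/
theorem M4_reduced_separable :
    IsSeparableTwoQubit (rhoAB M4) ∧ IsSeparableTwoQubit (rhoAC M4) ∧ IsSeparableTwoQubit (rhoAD M4) := by
  exact ⟨rhoAB_eq ▸ Rmat_separable, rhoAC_eq ▸ Rmat_separable, rhoAD_eq ▸ Rmat_separable⟩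
end

section
/- If A is a square matrix all of whose eigenvalues λ satisfy 0 < λ < 1, then for a variation A ↦ A + δA, the first-order variation of log A is δ log A = ∫₀¹ [I − t(I−A)]^{-1} δA [I − t(I−A)]^{-1} dt. -/
open scoped BigOperators

/-- The matrix logarithm defined by the series log A = −Σ_{n≥1} (I−A)ⁿ/n,
convergent when the spectral radius of I−A is less than 1. -/
noncomputable def mlog {N : ℕ} (M : Matrix (Fin N) (Fin N) ℂ) : Matrix (Fin N) (Fin N) ℂ :=
  -∑' n : ℕ, (((n + 1 : ℕ) : ℂ))⁻¹ • (1 - M) ^ (n + 1)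

namespace FVlog
open scoped Pointwise
variable {N : ℕ}



/-- entrywise 1-norm (sum of absolute values of entries) -/
noncomputable def nu (X : Matrix (Fin N) (Fin N) ℂ) : ℝ := ∑ i, ∑ j, ‖X i j‖

lemma nu_nonneg (X : Matrix (Fin N) (Fin N) ℂ) : 0 ≤ nu X :=
  Finset.sum_nonneg fun _ _ => Finset.sum_nonneg fun _ _ => norm_nonneg _

lemma entry_le_nu (X : Matrix (Fin N) (Fin N) ℂ) (i j : Fin N) : ‖X i j‖ ≤ nu X := by
  have h1 : ‖X i j‖ ≤ ∑ j', ‖X i j'‖ :=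
    Finset.single_le_sum (fun _ _ => norm_nonneg _) (Finset.mem_univ j)
  refine h1.trans ?_
  exact Finset.single_le_sum (f := fun i' => ∑ j', ‖X i' j'‖)
    (fun _ _ => Finset.sum_nonneg fun _ _ => norm_nonneg _) (Finset.mem_univ i)

lemma nu_mul_le (X Y : Matrix (Fin N) (Fin N) ℂ) : nu (X * Y) ≤ nu X * nu Y := by
  calc nu (X * Y) = ∑ i, ∑ j, ‖∑ k, X i k * Y k j‖ := by
        simp [nu, Matrix.mul_apply]
    _ ≤ ∑ i, ∑ j, ∑ k, ‖X i k‖ * ‖Y k j‖ := by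
        refine Finset.sum_le_sum fun i _ => Finset.sum_le_sum fun j _ => ?_
        exact (norm_sum_le _ _).trans (le_of_eq (by simp [norm_mul]))
    _ ≤ nu X * nu Y := by
        rw [nu, Finset.sum_mul]
        refine Finset.sum_le_sum fun i _ => ?_
        rw [Finset.sum_comm, Finset.sum_mul]
        refine Finset.sum_le_sum fun k _ => ?_
        rw [← Finset.mul_sum]
        refine mul_le_mul_of_nonneg_left ?_ (norm_nonneg _)
        refine le_trans ?_ (Finset.single_le_sum (f := fun i' => ∑ j', ‖Y i' j'‖)
          (fun _ _ => Finset.sum_nonneg fun _ _ => norm_nonneg _) (Finset.mem_univ k))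
        exact le_refl _

lemma nu_sub_le (X Y : Matrix (Fin N) (Fin N) ℂ) : nu (X - Y) ≤ nu X + nu Y := by
  rw [nu, nu, nu, ← Finset.sum_add_distrib]
  refine Finset.sum_le_sum fun i _ => ?_
  rw [← Finset.sum_add_distrib]
  exact Finset.sum_le_sum fun j _ => by simpa using norm_sub_le (X i j) (Y i j)

lemma nu_smul (c : ℂ) (X : Matrix (Fin N) (Fin N) ℂ) : nu (c • X) = ‖c‖ * nu X := by
  simp [nu, Finset.mul_sum, norm_mul]



lemma entry_le_linfty (X : Matrix (Fin N) (Fin N) ℂ) (i j : Fin N) :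
    letI := Matrix.linftyOpNormedAddCommGroup (α := ℂ) (m := Fin N) (n := Fin N)
    ‖X i j‖ ≤ ‖X‖ := by
  letI := Matrix.linftyOpNormedAddCommGroup (α := ℂ) (m := Fin N) (n := Fin N)
  have h := Matrix.linfty_opNNNorm_def X
  have h1 : ‖X i j‖₊ ≤ ‖X‖₊ := by
    rw [h]
    calc ‖X i j‖₊ ≤ ∑ j', ‖X i j'‖₊ :=
          Finset.single_le_sum (f := fun j' => ‖X i j'‖₊) (fun _ _ => zero_le) (Finset.mem_univ j)
      _ ≤ _ := Finset.le_sup (f := fun i' => ∑ j', ‖X i' j'‖₊) (Finset.mem_univ i)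
  exact h1

/-- Gelfand: entrywise geometric bound on powers when all eigenvalues have modulus < 1. -/
lemma gelfand_bound (E : Matrix (Fin N) (Fin N) ℂ)
    (h : ∀ μ ∈ spectrum ℂ E, ‖μ‖ < 1) :
    ∃ C r : ℝ, 0 < C ∧ 0 < r ∧ r < 1 ∧ ∀ n i j, ‖(E ^ n) i j‖ ≤ C * r ^ n := by
  letI := Matrix.linftyOpNormedAddCommGroup (α := ℂ) (m := Fin N) (n := Fin N)
  letI := Matrix.linftyOpNormedRing (α := ℂ) (n := Fin N)
  letI := Matrix.linftyOpNormedAlgebra (α := ℂ) (R := ℂ) (n := Fin N)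
  obtain ⟨r, hr0, hr1, hsr⟩ : ∃ r : ℝ, 0 < r ∧ r < 1 ∧
      spectralRadius ℂ E < ENNReal.ofReal r := by
    rcases Set.eq_empty_or_nonempty (spectrum ℂ E) with he | hne
    · refine ⟨1/2, by norm_num, by norm_num, ?_⟩
      have : spectralRadius ℂ E = 0 := by
        simp [spectralRadius, he]
      rw [this]; simp [ENNReal.ofReal_pos]
    · have hfin := Matrix.finite_spectrum E
      obtain ⟨μ₀, hμ₀, hmax⟩ := (Set.toFinite _).exists_maximalFor (fun μ => ‖μ‖) _ hne
      have hr₀1 : ‖μ₀‖ < 1 := h μ₀ hμ₀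
      have hub : ∀ μ ∈ spectrum ℂ E, ‖μ‖ ≤ ‖μ₀‖ := by
        intro μ hμ
        by_contra hlt
        push_neg at hlt
        exact absurd (hmax hμ hlt.le : ‖μ‖ ≤ ‖μ₀‖) (not_le.mpr hlt)
      refine ⟨(‖μ₀‖ + 1) / 2, by positivity, by linarith, ?_⟩
      have hle : spectralRadius ℂ E ≤ ENNReal.ofReal ‖μ₀‖ := by
        rw [spectralRadius]
        refine iSup₂_le fun μ hμ => ?_
        rw [← ENNReal.ofReal_coe_nnreal, coe_nnnorm]
        exact ENNReal.ofReal_le_ofReal (hub μ hμ)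
      refine lt_of_le_of_lt hle (ENNReal.ofReal_lt_ofReal_iff (by positivity) |>.mpr (by linarith))
  have hten := spectrum.pow_nnnorm_pow_one_div_tendsto_nhds_spectralRadius E
  have hev := hten.eventually_lt_const hsr
  rw [Filter.eventually_atTop] at hev
  obtain ⟨n₀, hn₀⟩ := hev
  have hbig : ∀ n, max n₀ 1 ≤ n → ‖E ^ n‖ ≤ r ^ n := by
    intro n hn
    have hn0 : n₀ ≤ n := le_trans (le_max_left _ _) hn
    have hnpos : 1 ≤ n := le_trans (le_max_right _ _) hn
    have hne : (n : ℝ) ≠ 0 := Nat.cast_ne_zero.mpr (by omega)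
    have h1 := (hn₀ n hn0).le
    have h2 : ((‖E ^ n‖₊ : ENNReal) ^ ((1 : ℝ) / n)) ^ (n : ℝ) ≤
        (ENNReal.ofReal r) ^ (n : ℝ) :=
      ENNReal.rpow_le_rpow h1 (by positivity)
    rw [← ENNReal.rpow_mul, one_div, inv_mul_cancel₀ hne, ENNReal.rpow_one] at h2
    rw [show (ENNReal.ofReal r) ^ (n:ℝ) = ENNReal.ofReal (r ^ (n:ℝ)) from
      ENNReal.ofReal_rpow_of_pos hr0, ← ENNReal.ofReal_coe_nnreal, coe_nnnorm] at h2
    have h3 := (ENNReal.ofReal_le_ofReal_iff (by positivity)).mp h2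
    rwa [Real.rpow_natCast] at h3
  obtain ⟨C, hCdef⟩ : ∃ C : ℝ, C = 1 + ∑ n ∈ Finset.range (max n₀ 1), ‖E ^ n‖ / r ^ n := ⟨_, rfl⟩
  have hsum0 : 0 ≤ ∑ n ∈ Finset.range (max n₀ 1), ‖E ^ n‖ / r ^ n :=
    Finset.sum_nonneg fun n _ => by positivity
  have hC1 : 1 ≤ C := by rw [hCdef]; linarith
  refine ⟨C, r, by linarith, hr0, hr1, fun n i j => ?_⟩
  refine (entry_le_linfty (E ^ n) i j).trans ?_
  have hrn : (0:ℝ) < r ^ n := by positivity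
  rcases lt_or_ge n (max n₀ 1) with hlt | hge
  · have hterm : ‖E ^ n‖ / r ^ n ≤ C - 1 := by
      rw [hCdef]
      simp only [add_sub_cancel_left]
      exact Finset.single_le_sum (f := fun m => ‖E ^ m‖ / r ^ m)
        (fun m _ => by positivity) (Finset.mem_range.mpr hlt)
    rw [div_le_iff₀ hrn] at hterm
    nlinarith
  · have hb := hbig n hge
    nlinarith


/-- main geometric bound for perturbed powers -/
lemma key_bound (E D : Matrix (Fin N) (Fin N) ℂ) (C r r' : ℝ) (hC : 0 ≤ C)
    (hr : 0 ≤ r) (hrr' : r ≤ r') (hE : ∀ n, nu (E ^ n) ≤ C * r ^ n)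
    (x : ℂ) (hx : ‖x‖ * (C * nu D) ≤ r' - r) :
    ∀ k n, nu (E ^ n * (E - x • D) ^ k) ≤ C * r ^ n * r' ^ k := by
  intro k
  induction k with
  | zero => intro n; simpa using hE n
  | succ k ih =>
    intro n
    have hr' : 0 ≤ r' := le_trans hr hrr'
    have hEnl : E ^ n * (E - x • D) = E ^ (n + 1) - x • (E ^ n * D) := by
      rw [mul_sub, mul_smul_comm, pow_succ]
    have heq : E ^ n * (E - x • D) ^ (k + 1) =
        E ^ (n + 1) * (E - x • D) ^ k - x • (E ^ n * D * (E - x • D) ^ k) := by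
      rw [pow_succ' (E - x • D) k, ← mul_assoc, hEnl, sub_mul, smul_mul_assoc, mul_assoc]
    rw [heq]
    have h1 : nu (E ^ (n+1) * (E - x • D) ^ k) ≤ C * r ^ (n+1) * r' ^ k := ih (n+1)
    have h2 : nu (E ^ n * D * (E - x • D) ^ k) ≤ (C * r ^ n) * nu D * (C * r' ^ k) := by
      calc nu (E ^ n * D * (E - x • D) ^ k)
          ≤ nu (E ^ n * D) * nu ((E - x • D) ^ k) := nu_mul_le _ _
        _ ≤ (nu (E ^ n) * nu D) * nu ((E - x • D) ^ k) := by
            exact mul_le_mul_of_nonneg_right (nu_mul_le _ _) (nu_nonneg _)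
        _ ≤ (C * r ^ n * nu D) * (C * r' ^ k) := by
            have := ih 0
            simp only [pow_zero, one_mul] at this
            refine mul_le_mul ?_ ?_ (nu_nonneg _) ?_
            · exact mul_le_mul_of_nonneg_right (hE n) (nu_nonneg _)
            · simpa using this
            · have := nu_nonneg D; positivity
    calc nu (E ^ (n+1) * (E - x • D) ^ k - x • (E ^ n * D * (E - x • D) ^ k))
        ≤ nu (E ^ (n+1) * (E - x • D) ^ k) + nu (x • (E ^ n * D * (E - x • D) ^ k)) :=
          nu_sub_le _ _
      _ ≤ C * r ^ (n+1) * r' ^ k + ‖x‖ * ((C * r ^ n) * nu D * (C * r' ^ k)) := by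
          rw [nu_smul]
          exact add_le_add h1 (mul_le_mul_of_nonneg_left h2 (norm_nonneg _))
      _ ≤ C * r ^ n * r' ^ (k + 1) := by
          have hxb : ‖x‖ * (C * nu D) * (C * r ^ n * r' ^ k)
              ≤ (r' - r) * (C * r ^ n * r' ^ k) :=
            mul_le_mul_of_nonneg_right hx (by positivity)
          have e1 : ‖x‖ * (C * r ^ n * nu D * (C * r' ^ k))
              = ‖x‖ * (C * nu D) * (C * r ^ n * r' ^ k) := by ring
          have e2 : C * r ^ (n+1) * r' ^ k + (r' - r) * (C * r ^ n * r' ^ k)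
              = C * r ^ n * r' ^ (k+1) := by rw [pow_succ, pow_succ]; ring
          linarith [hxb, e1.le, e1.ge]

/-- entrywise HasDerivAt predicate for matrix-valued functions of a real variable -/
def HDa (F : ℝ → Matrix (Fin N) (Fin N) ℂ) (F' : Matrix (Fin N) (Fin N) ℂ) (x : ℝ) : Prop :=
  ∀ i j, HasDerivAt (fun s => F s i j) (F' i j) x

lemma HDa.mul {F G : ℝ → Matrix (Fin N) (Fin N) ℂ} {F' G' : Matrix (Fin N) (Fin N) ℂ} {x : ℝ}
    (hF : HDa F F' x) (hG : HDa G G' x) :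
    HDa (fun s => F s * G s) (F' * G x + F x * G') x := by
  intro i j
  have : (fun s => (F s * G s) i j) = fun s => ∑ k, F s i k * G s k j := by
    funext s; simp [Matrix.mul_apply]
  rw [this]
  have hsum : HasDerivAt (fun s => ∑ k, F s i k * G s k j)
      (∑ k, (F' i k * G x k j + F x i k * G' k j)) x := by
    refine HasDerivAt.fun_sum fun k _ => ?_
    exact (hF i k).mul (hG k j)
  convert hsum using 1
  simp [Matrix.add_apply, Matrix.mul_apply, Finset.sum_add_distrib]

lemma HDa.const (Y : Matrix (Fin N) (Fin N) ℂ) (x : ℝ) : HDa (fun _ => Y) 0 x := by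
  intro i j
  simpa using hasDerivAt_const x (Y i j)

lemma hd_line (E D : Matrix (Fin N) (Fin N) ℂ) (x : ℝ) :
    HDa (fun s => E - (s : ℂ) • D) (-D) x := by
  intro i j
  have : (fun s : ℝ => (E - (s:ℂ) • D) i j) = fun s : ℝ => E i j - (s:ℂ) * D i j := by
    funext s; simp [Matrix.sub_apply, Matrix.smul_apply, smul_eq_mul]
  rw [this]
  have hc : HasDerivAt (fun s : ℝ => (s : ℂ)) 1 x := by
    exact Complex.ofRealCLM.hasDerivAt (x := x)
  exact ((hasDerivAt_const x (E i j)).sub (hc.mul_const (D i j))).congr_deriv (by simp)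

lemma hd_pow (E D : Matrix (Fin N) (Fin N) ℂ) (x : ℝ) (m : ℕ) :
    HDa (fun s => (E - (s:ℂ) • D) ^ m)
      (∑ k ∈ Finset.range m,
        (E - (x:ℂ) • D) ^ k * (-D) * (E - (x:ℂ) • D) ^ (m - 1 - k)) x := by
  induction m with
  | zero =>
    simp only [pow_zero, Finset.range_zero, Finset.sum_empty]
    exact HDa.const 1 x
  | succ m ih =>
    have h0 := HDa.mul ih (hd_line E D x)
    have h : HDa (fun s => (E - (s:ℂ) • D) ^ (m+1))
        ((∑ k ∈ Finset.range m, (E - (x:ℂ) • D) ^ k * (-D) * (E - (x:ℂ) • D) ^ (m - 1 - k))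
          * (E - (x:ℂ) • D) + (E - (x:ℂ) • D) ^ m * (-D)) x := by
      intro i j
      refine ((h0 i j).congr_of_eventuallyEq (Filter.Eventually.of_forall fun s => ?_))
      simp only [pow_succ]
    convert h using 1
    set M := E - (x:ℂ) • D with hM
    have h1 : ∑ k ∈ Finset.range (m+1), M ^ k * -D * M ^ (m+1-1-k)
        = (∑ k ∈ Finset.range m, M ^ k * -D * M ^ (m-k)) + M ^ m * -D := by
      rw [Finset.sum_range_succ, show m+1-1-m = 0 from by omega, pow_zero, mul_one]
      exact congrArg (fun S => S + M ^ m * -D)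
        (Finset.sum_congr rfl fun k _ => by rw [show m+1-1-k = m-k from by omega])
    have h2 : (∑ k ∈ Finset.range m, M ^ k * -D * M ^ (m-1-k)) * M
        = ∑ k ∈ Finset.range m, M ^ k * -D * M ^ (m-k) := by
      rw [Finset.sum_mul]
      refine Finset.sum_congr rfl fun k hk => ?_
      rw [Finset.mem_range] at hk
      rw [mul_assoc, ← pow_succ, show m-1-k+1 = m-k from by omega]
    rw [h1, h2]

/-- entrywise geometric series for the resolvent -/
noncomputable def Sm (E : Matrix (Fin N) (Fin N) ℂ) (z : ℂ) : Matrix (Fin N) (Fin N) ℂ :=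
  Matrix.of fun i j => ∑' a : ℕ, z ^ a * (E ^ a) i j

section series
variable (E D : Matrix (Fin N) (Fin N) ℂ) (C r : ℝ) (z : ℂ)
  (hC : 0 ≤ C) (hr0 : 0 < r) (hr1 : r < 1)
  (hE : ∀ n i j, ‖(E ^ n) i j‖ ≤ C * r ^ n) (hz : ‖z‖ ≤ 1)

include hC hr0 hr1 hE hz

lemma Sm_norm_summable : ∀ i j, Summable fun a : ℕ => ‖z ^ a * (E ^ a) i j‖ := by
  intro i j
  refine Summable.of_nonneg_of_le (fun a => norm_nonneg _) (fun a => ?_)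
    ((summable_geometric_of_lt_one hr0.le hr1).mul_left C)
  rw [norm_mul, norm_pow]
  calc ‖z‖ ^ a * ‖(E ^ a) i j‖ ≤ 1 * ‖(E ^ a) i j‖ := by
        refine mul_le_mul_of_nonneg_right ?_ (norm_nonneg _)
        exact pow_le_one₀ (norm_nonneg z) hz
    _ ≤ C * r ^ a := by rw [one_mul]; exact hE a i j

lemma Sm_summable : ∀ i j, Summable fun a : ℕ => z ^ a * (E ^ a) i j := fun i j =>
  (Sm_norm_summable E C r z hC hr0 hr1 hE hz i j).of_norm

/-- Step A: (1 - z•E) * Sm = 1 -/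
lemma one_sub_smul_mul_Sm : (1 - z • E) * Sm E z = 1 := by
  have hsum := Sm_summable E C r z hC hr0 hr1 hE hz
  have hmul : (1 - z • E) * Sm E z = Sm E z - z • (E * Sm E z) := by
    rw [sub_mul, one_mul, smul_mul_assoc]
  rw [hmul]
  ext i j
  have hES : (E * Sm E z) i j = ∑' a : ℕ, z ^ a * (E ^ (a + 1)) i j := by
    rw [Matrix.mul_apply]
    have h1 : ∀ k, E i k * ∑' a : ℕ, z ^ a * (E ^ a) k j
        = ∑' a : ℕ, E i k * (z ^ a * (E ^ a) k j) := fun k => (tsum_mul_left).symm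
    simp only [Sm, Matrix.of_apply]
    rw [Finset.sum_congr rfl fun k _ => h1 k]
    rw [← Summable.tsum_finsetSum (fun k _ => (hsum k j).mul_left (E i k))]
    refine tsum_congr fun a => ?_
    rw [pow_succ']
    rw [Matrix.mul_apply, Finset.mul_sum]
    exact Finset.sum_congr rfl fun k _ => by ring
  have hS : (Sm E z) i j = (E ^ 0) i j + ∑' a : ℕ, z ^ (a + 1) * (E ^ (a + 1)) i j := by
    simp only [Sm, Matrix.of_apply]
    rw [Summable.tsum_eq_zero_add (hsum i j), pow_zero, one_mul]
  have hzT : z * ∑' a : ℕ, z ^ a * (E ^ (a + 1)) i j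
      = ∑' a : ℕ, z ^ (a + 1) * (E ^ (a + 1)) i j := by
    rw [← tsum_mul_left]
    exact tsum_congr fun a => by ring
  rw [Matrix.sub_apply, Matrix.smul_apply, smul_eq_mul, hES, hzT, hS, pow_zero]
  simp

/-- Step B: entry of Sm * D * Sm as a power series in z -/
lemma Sm_mul_D_mul_Sm (i j : Fin N) :
    (Sm E z * D * Sm E z) i j
      = ∑' n : ℕ, z ^ n *
          ((∑ k ∈ Finset.range (n + 1), E ^ k * D * E ^ (n - k)) i j) := by
  have hnorm := Sm_norm_summable E C r z hC hr0 hr1 hE hz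
  have hsum := Sm_summable E C r z hC hr0 hr1 hE hz
  -- Cauchy product of entries
  have hcauchy : ∀ (k l : Fin N), (Sm E z) i k * (Sm E z) l j
      = ∑' n : ℕ, ∑ ab ∈ Finset.HasAntidiagonal.antidiagonal n,
          (z ^ ab.1 * (E ^ ab.1) i k) * (z ^ ab.2 * (E ^ ab.2) l j) := by
    intro k l
    exact tsum_mul_tsum_eq_tsum_sum_antidiagonal_of_summable_norm (hnorm i k) (hnorm l j)
  have hcsummable : ∀ (k l : Fin N), Summable fun n : ℕ =>
      ∑ ab ∈ Finset.HasAntidiagonal.antidiagonal n,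
        (z ^ ab.1 * (E ^ ab.1) i k) * (z ^ ab.2 * (E ^ ab.2) l j) := by
    intro k l
    exact (summable_norm_sum_mul_antidiagonal_of_summable_norm
      (hnorm i k) (hnorm l j)).of_norm
  -- expand the matrix product entrywise
  have hlhs : (Sm E z * D * Sm E z) i j
      = ∑ l, ∑ k, (Sm E z) i k * D k l * (Sm E z) l j := by
    rw [Matrix.mul_apply]
    refine Finset.sum_congr rfl fun l _ => ?_
    rw [Matrix.mul_apply, Finset.sum_mul]
  rw [hlhs]
  have hstep : ∀ (l k : Fin N), (Sm E z) i k * D k l * (Sm E z) l j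
      = ∑' n : ℕ, D k l * ∑ ab ∈ Finset.HasAntidiagonal.antidiagonal n,
          (z ^ ab.1 * (E ^ ab.1) i k) * (z ^ ab.2 * (E ^ ab.2) l j) := by
    intro l k
    rw [show (Sm E z) i k * D k l * (Sm E z) l j
        = D k l * ((Sm E z) i k * (Sm E z) l j) by ring, hcauchy k l, ← tsum_mul_left]
  have hswap : ∑ l, ∑ k, (Sm E z) i k * D k l * (Sm E z) l j
      = ∑' n : ℕ, ∑ l, ∑ k, D k l * ∑ ab ∈ Finset.HasAntidiagonal.antidiagonal n,
          (z ^ ab.1 * (E ^ ab.1) i k) * (z ^ ab.2 * (E ^ ab.2) l j) := by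
    rw [Finset.sum_congr rfl fun l _ => Finset.sum_congr rfl fun k _ => hstep l k]
    rw [Finset.sum_congr rfl fun l (_ : l ∈ Finset.univ) =>
      (Summable.tsum_finsetSum (f := fun k n => D k l * ∑ ab ∈ Finset.HasAntidiagonal.antidiagonal n,
          (z ^ ab.1 * (E ^ ab.1) i k) * (z ^ ab.2 * (E ^ ab.2) l j))
        (fun k _ => Summable.mul_left (D k l) (hcsummable k l))).symm]
    exact (Summable.tsum_finsetSum (fun l _ => summable_sum fun k _ =>
      Summable.mul_left (D k l) (hcsummable k l))).symm
  rw [hswap]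
  refine tsum_congr fun n => ?_
  have hR : z ^ n * ((∑ k ∈ Finset.range (n + 1), E ^ k * D * E ^ (n - k)) i j)
      = ∑ ab ∈ Finset.HasAntidiagonal.antidiagonal n, ∑ l, ∑ k,
          D k l * ((z ^ ab.1 * (E ^ ab.1) i k) * (z ^ ab.2 * (E ^ ab.2) l j)) := by
    rw [Matrix.sum_apply, Finset.mul_sum,
      ← Finset.Nat.sum_antidiagonal_eq_sum_range_succ_mk
        (fun ab => z ^ n * (E ^ ab.1 * D * E ^ ab.2) i j) n]
    refine Finset.sum_congr rfl fun ab hab => ?_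
    have habn : ab.1 + ab.2 = n := Finset.HasAntidiagonal.mem_antidiagonal.mp hab
    rw [Matrix.mul_apply, Finset.mul_sum]
    refine Finset.sum_congr rfl fun l _ => ?_
    rw [Matrix.mul_apply, Finset.sum_mul, Finset.mul_sum]
    refine Finset.sum_congr rfl fun k _ => ?_
    rw [← habn, pow_add]
    ring
  rw [hR]
  calc ∑ l, ∑ k, D k l * ∑ ab ∈ Finset.HasAntidiagonal.antidiagonal n,
        (z ^ ab.1 * (E ^ ab.1) i k) * (z ^ ab.2 * (E ^ ab.2) l j)
      = ∑ l, ∑ ab ∈ Finset.HasAntidiagonal.antidiagonal n, ∑ k,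
          D k l * ((z ^ ab.1 * (E ^ ab.1) i k) * (z ^ ab.2 * (E ^ ab.2) l j)) := by
        refine Finset.sum_congr rfl fun l _ => ?_
        rw [Finset.sum_congr rfl fun k (_ : k ∈ Finset.univ) => Finset.mul_sum
          (Finset.HasAntidiagonal.antidiagonal n)
          (fun ab => (z ^ ab.1 * (E ^ ab.1) i k) * (z ^ ab.2 * (E ^ ab.2) l j)) (D k l)]
        exact Finset.sum_comm
    _ = ∑ ab ∈ Finset.HasAntidiagonal.antidiagonal n, ∑ l, ∑ k,
          D k l * ((z ^ ab.1 * (E ^ ab.1) i k) * (z ^ ab.2 * (E ^ ab.2) l j)) :=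
        Finset.sum_comm
end series

lemma summable_aux {K ρ : ℝ} (hρ0 : 0 ≤ ρ) (hρ1 : ρ < 1) :
    Summable (fun n : ℕ => K * (n + 1) * ρ ^ n) := by
  have h1 : Summable (fun n : ℕ => (n : ℝ) ^ 1 * ρ ^ n) :=
    summable_pow_mul_geometric_of_norm_lt_one 1 (by rwa [Real.norm_eq_abs, abs_of_nonneg hρ0])
  have h2 : Summable (fun n : ℕ => ρ ^ n) := summable_geometric_of_lt_one hρ0 hρ1
  have h3 : Summable (fun n : ℕ => ((n : ℝ) * ρ ^ n + ρ ^ n)) := by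
    simpa using h1.add h2
  refine (h3.mul_left K).congr fun n => ?_
  ring

lemma integral_tsum_pow (c : ℕ → ℂ) (K ρ : ℝ) (hρ0 : 0 < ρ) (hρ1 : ρ < 1)
    (hc : ∀ n, ‖c n‖ ≤ K * (n + 1) * ρ ^ n) :
    ∫ t in (0:ℝ)..1, (∑' n : ℕ, (t:ℂ) ^ n * c n) = ∑' n : ℕ, (((n + 1 : ℕ) : ℂ))⁻¹ * c n := by
  have hcs : Summable fun n => ‖c n‖ :=
    Summable.of_nonneg_of_le (fun _ => norm_nonneg _) hc (summable_aux hρ0.le hρ1)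
  have hmeas : ∀ n : ℕ, MeasureTheory.AEStronglyMeasurable
      (fun t : ℝ => (t:ℂ) ^ n * c n) (MeasureTheory.volume.restrict (Set.Ioc (0:ℝ) 1)) :=
    fun n => ((Complex.continuous_ofReal.pow n).mul continuous_const).aestronglyMeasurable
  have hlint : ∑' n : ℕ, ∫⁻ t, ‖(t:ℂ) ^ n * c n‖₊
      ∂(MeasureTheory.volume.restrict (Set.Ioc (0:ℝ) 1)) ≠ ⊤ := by
    have hb : ∀ n : ℕ, ∫⁻ t, ‖(t:ℂ) ^ n * c n‖₊
        ∂(MeasureTheory.volume.restrict (Set.Ioc (0:ℝ) 1)) ≤ (‖c n‖₊ : ENNReal) := by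
      intro n
      have hle : ∀ t ∈ Set.Ioc (0:ℝ) 1, (‖(t:ℂ) ^ n * c n‖₊ : ENNReal) ≤ (‖c n‖₊ : ENNReal) := by
        intro t ht
        have hle' : ‖(t:ℂ) ^ n * c n‖ ≤ ‖c n‖ := by
          rw [norm_mul, norm_pow]
          have h1 : ‖(t:ℂ)‖ ≤ 1 := by
            rw [Complex.norm_real, Real.norm_eq_abs, abs_of_pos ht.1]
            exact ht.2
          calc ‖(t:ℂ)‖ ^ n * ‖c n‖ ≤ 1 * ‖c n‖ :=
                mul_le_mul_of_nonneg_right (pow_le_one₀ (norm_nonneg _) h1) (norm_nonneg _)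
            _ = ‖c n‖ := one_mul _
        exact_mod_cast ENNReal.coe_le_coe.mpr (by exact_mod_cast hle')
      calc ∫⁻ t, ‖(t:ℂ) ^ n * c n‖₊ ∂(MeasureTheory.volume.restrict (Set.Ioc (0:ℝ) 1))
          = ∫⁻ t in Set.Ioc (0:ℝ) 1, ‖(t:ℂ) ^ n * c n‖₊ ∂MeasureTheory.volume := rfl
        _ ≤ ∫⁻ _ in Set.Ioc (0:ℝ) 1, (‖c n‖₊ : ENNReal) ∂MeasureTheory.volume :=
            MeasureTheory.setLIntegral_mono measurable_const hle
        _ = (‖c n‖₊ : ENNReal) * MeasureTheory.volume (Set.Ioc (0:ℝ) 1) :=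
            MeasureTheory.setLIntegral_const _ _
        _ = (‖c n‖₊ : ENNReal) := by
            rw [Real.volume_Ioc]
            norm_num
    refine ne_top_of_le_ne_top ?_ (ENNReal.tsum_le_tsum hb)
    exact ENNReal.tsum_coe_ne_top_iff_summable.mpr (by
      exact NNReal.summable_coe.mp (by simpa [coe_nnnorm] using hcs))
  rw [intervalIntegral.integral_of_le zero_le_one,
    MeasureTheory.integral_tsum hmeas hlint]
  refine tsum_congr fun n => ?_
  rw [← intervalIntegral.integral_of_le zero_le_one]
  have h1 : ∫ t in (0:ℝ)..1, (t:ℂ) ^ n * c n = (∫ t in (0:ℝ)..1, (t:ℂ) ^ n) * c n :=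
    intervalIntegral.integral_mul_const _ _
  have h2 : ∫ t in (0:ℝ)..1, (t:ℂ) ^ n = (((n + 1 : ℕ) : ℂ))⁻¹ := by
    have : (fun t : ℝ => (t:ℂ) ^ n) = fun t : ℝ => ((t ^ n : ℝ) : ℂ) := by
      funext t; push_cast; ring
    rw [this, intervalIntegral.integral_ofReal, integral_pow]
    push_cast
    norm_num
  rw [h1, h2]

lemma matrix_tsum_apply {X : ℕ → Matrix (Fin N) (Fin N) ℂ}
    (h : ∀ i j, Summable fun n => X n i j) (i j : Fin N) :
    (∑' n, X n) i j = ∑' n, X n i j := by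
  have hs : HasSum X (Matrix.of fun i j => ∑' n, X n i j) := by
    refine Pi.hasSum.mpr ?_
    intro i
    refine Pi.hasSum.mpr ?_
    intro j
    exact (h i j).hasSum
  rw [hs.tsum_eq]
  rfl

lemma spec_one_sub (A : Matrix (Fin N) (Fin N) ℂ)
    (hspec : ∀ μ ∈ spectrum ℂ A, 0 < μ.re ∧ μ.re < 1 ∧ μ.im = 0) :
    ∀ μ ∈ spectrum ℂ (1 - A), ‖μ‖ < 1 := by
  intro μ hμ
  have h1 : spectrum ℂ ((algebraMap ℂ (Matrix (Fin N) (Fin N) ℂ)) 1 - A)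
      = ({1} : Set ℂ) - spectrum ℂ A := (spectrum.singleton_sub_eq A 1).symm
  rw [show (1 : Matrix (Fin N) (Fin N) ℂ) - A
      = (algebraMap ℂ (Matrix (Fin N) (Fin N) ℂ)) 1 - A by simp] at hμ
  rw [h1] at hμ
  obtain ⟨x, hx, y, hy, hxy⟩ := Set.mem_sub.mp hμ
  rw [Set.mem_singleton_iff] at hx
  subst hx
  obtain ⟨h0, h1', h2⟩ := hspec y hy
  have him : μ.im = 0 := by
    rw [← hxy]; simp [h2]
  have hre : μ.re = 1 - y.re := by rw [← hxy]; simp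
  have : μ = ((1 - y.re : ℝ) : ℂ) := by
    apply Complex.ext <;> simp [him, hre]
  rw [this, Complex.norm_real, Real.norm_eq_abs, abs_of_pos (by linarith)]
  linarith
end FVlog

/-- If all eigenvalues λ of A satisfy 0 < λ < 1, then the first-order variation of log A in
the direction δA is ∫₀¹ [I − t(I−A)]⁻¹ δA [I − t(I−A)]⁻¹ dt (stated entrywise): the
derivative at s = 0 of s ↦ log(A + s·δA) equals that integral. -/
theorem firstVariation_mlog {N : ℕ} (A δA : Matrix (Fin N) (Fin N) ℂ)
    (hspec : ∀ μ ∈ spectrum ℂ A, 0 < μ.re ∧ μ.re < 1 ∧ μ.im = 0) :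
    ∀ i j, HasDerivAt (fun s : ℝ => mlog (A + (s : ℂ) • δA) i j)
      (∫ t in (0:ℝ)..1,
        ((1 - (t : ℂ) • (1 - A))⁻¹ * δA * (1 - (t : ℂ) • (1 - A))⁻¹) i j) 0 := by
  classical
  intro i j
  obtain ⟨C, r, hC, hr0, hr1, hE⟩ := FVlog.gelfand_bound (1 - A) (FVlog.spec_one_sub A hspec)
  have hδ0 : 0 ≤ FVlog.nu δA := FVlog.nu_nonneg δA
  obtain ⟨C₁, hC₁def⟩ : ∃ C₁ : ℝ, C₁ = (N:ℝ)^2 * C + 1 := ⟨_, rfl⟩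
  have hC₁ : 0 < C₁ := by rw [hC₁def]; positivity
  have hEnu : ∀ n, FVlog.nu ((1 - A) ^ n) ≤ C₁ * r ^ n := by
    intro n
    have h1 : FVlog.nu ((1 - A) ^ n) ≤ (N:ℝ)^2 * (C * r ^ n) := by
      rw [FVlog.nu]
      calc ∑ i', ∑ j', ‖((1 - A) ^ n) i' j'‖
          ≤ ∑ _i' : Fin N, ∑ _j' : Fin N, (C * r ^ n) :=
            Finset.sum_le_sum fun i' _ => Finset.sum_le_sum fun j' _ => hE n i' j'
        _ = (N:ℝ)^2 * (C * r ^ n) := by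
            simp [Finset.sum_const, Finset.card_univ]
            ring
    have hrn : (0:ℝ) < r ^ n := by positivity
    rw [hC₁def]
    nlinarith
  obtain ⟨r', hr'def⟩ : ∃ r' : ℝ, r' = (1 + r)/2 := ⟨_, rfl⟩
  have hrr' : r < r' := by rw [hr'def]; linarith
  have hr'0 : 0 < r' := lt_trans hr0 hrr'
  have hr'1 : r' < 1 := by rw [hr'def]; linarith
  obtain ⟨ε, hεdef⟩ : ∃ ε : ℝ, ε = (r' - r)/(C₁ * (FVlog.nu δA + 1)) := ⟨_, rfl⟩
  have hden : 0 < C₁ * (FVlog.nu δA + 1) := mul_pos hC₁ (by linarith)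
  have hε : 0 < ε := by rw [hεdef]; exact div_pos (by linarith) hden
  have hxkey : ∀ y : ℝ, y ∈ Metric.ball (0:ℝ) ε →
      ‖(y:ℂ)‖ * (C₁ * FVlog.nu δA) ≤ r' - r := by
    intro y hy
    rw [Metric.mem_ball, Real.dist_eq, sub_zero] at hy
    have hynorm : ‖(y:ℂ)‖ = |y| := by rw [Complex.norm_real, Real.norm_eq_abs]
    have hεmul : ε * (C₁ * (FVlog.nu δA + 1)) = r' - r := by
      rw [hεdef]; field_simp
    calc ‖(y:ℂ)‖ * (C₁ * FVlog.nu δA) ≤ ε * (C₁ * FVlog.nu δA) := by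
          rw [hynorm]
          exact mul_le_mul_of_nonneg_right hy.le (by positivity)
      _ ≤ ε * (C₁ * (FVlog.nu δA + 1)) := by
          refine mul_le_mul_of_nonneg_left ?_ hε.le
          nlinarith
      _ = r' - r := hεmul
  have hMk : ∀ y : ℝ, y ∈ Metric.ball (0:ℝ) ε → ∀ k,
      FVlog.nu (((1 - A) - (y:ℂ) • δA) ^ k) ≤ C₁ * r' ^ k := by
    intro y hy k
    have h := FVlog.key_bound (1 - A) δA C₁ r r' hC₁.le hr0.le hrr'.le hEnu (y:ℂ)
      (hxkey y hy) k 0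
    simpa using h
  -- the series terms and their derivatives
  have hderiv : ∀ (n : ℕ) (y : ℝ), y ∈ Metric.ball (0:ℝ) ε →
      HasDerivAt (fun s : ℝ => -(((n + 1 : ℕ) : ℂ))⁻¹ * (((1 - A) - (s:ℂ) • δA) ^ (n+1)) i j)
        ((((n + 1 : ℕ) : ℂ))⁻¹ * ((∑ k ∈ Finset.range (n+1),
          ((1 - A) - (y:ℂ) • δA) ^ k * δA * ((1 - A) - (y:ℂ) • δA) ^ (n - k)) i j)) y := by
    intro n y _
    have h0 := FVlog.hd_pow (1 - A) δA y (n+1) i j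
    have heq : (∑ k ∈ Finset.range (n+1),
          ((1 - A) - (y:ℂ) • δA) ^ k * (-δA) * ((1 - A) - (y:ℂ) • δA) ^ (n+1-1-k))
        = -(∑ k ∈ Finset.range (n+1),
          ((1 - A) - (y:ℂ) • δA) ^ k * δA * ((1 - A) - (y:ℂ) • δA) ^ (n - k)) := by
      rw [← Finset.sum_neg_distrib]
      refine Finset.sum_congr rfl fun k _ => ?_
      rw [show n+1-1-k = n-k from by omega, mul_neg, neg_mul]
    rw [heq] at h0
    have h1 := h0.const_mul (-(((n + 1 : ℕ) : ℂ))⁻¹)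
    refine h1.congr_deriv ?_
    rw [Matrix.neg_apply]
    ring
  have hu : Summable (fun n : ℕ => C₁^2 * FVlog.nu δA * r' ^ n) :=
    (summable_geometric_of_lt_one hr'0.le hr'1).mul_left _
  have hbound : ∀ (n : ℕ) (y : ℝ), y ∈ Metric.ball (0:ℝ) ε →
      ‖(((n + 1 : ℕ) : ℂ))⁻¹ * ((∑ k ∈ Finset.range (n+1),
          ((1 - A) - (y:ℂ) • δA) ^ k * δA * ((1 - A) - (y:ℂ) • δA) ^ (n - k)) i j)‖
        ≤ C₁^2 * FVlog.nu δA * r' ^ n := by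
    intro n y hy
    rw [norm_mul, norm_inv, Complex.norm_natCast]
    have hterm : ∀ k ∈ Finset.range (n+1),
        ‖(((1 - A) - (y:ℂ) • δA) ^ k * δA * ((1 - A) - (y:ℂ) • δA) ^ (n - k)) i j‖
          ≤ C₁^2 * FVlog.nu δA * r' ^ n := by
      intro k hk
      rw [Finset.mem_range] at hk
      refine (FVlog.entry_le_nu _ i j).trans ?_
      calc FVlog.nu (((1 - A) - (y:ℂ) • δA) ^ k * δA * ((1 - A) - (y:ℂ) • δA) ^ (n - k))
          ≤ FVlog.nu (((1 - A) - (y:ℂ) • δA) ^ k * δA)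
            * FVlog.nu (((1 - A) - (y:ℂ) • δA) ^ (n - k)) := FVlog.nu_mul_le _ _
        _ ≤ (FVlog.nu (((1 - A) - (y:ℂ) • δA) ^ k) * FVlog.nu δA)
            * FVlog.nu (((1 - A) - (y:ℂ) • δA) ^ (n - k)) :=
            mul_le_mul_of_nonneg_right (FVlog.nu_mul_le _ _) (FVlog.nu_nonneg _)
        _ ≤ (C₁ * r' ^ k * FVlog.nu δA) * (C₁ * r' ^ (n - k)) := by
            refine mul_le_mul ?_ (hMk y hy (n - k)) (FVlog.nu_nonneg _) (by positivity)
            exact mul_le_mul_of_nonneg_right (hMk y hy k) hδ0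
        _ = C₁^2 * FVlog.nu δA * r' ^ n := by
            rw [show n = k + (n - k) from by omega, pow_add]
            rw [show k + (n - k) - k = n - k from by omega]
            ring
    have hsum : ‖(∑ k ∈ Finset.range (n+1),
        ((1 - A) - (y:ℂ) • δA) ^ k * δA * ((1 - A) - (y:ℂ) • δA) ^ (n - k)) i j‖
          ≤ ((n + 1 : ℕ) : ℝ) * (C₁^2 * FVlog.nu δA * r' ^ n) := by
      rw [Matrix.sum_apply]
      refine (norm_sum_le _ _).trans ?_
      refine (Finset.sum_le_sum hterm).trans ?_
      rw [Finset.sum_const, Finset.card_range, nsmul_eq_mul]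
    have hpos : (0:ℝ) < ((n + 1 : ℕ) : ℝ) := by positivity
    calc (((n + 1 : ℕ) : ℝ))⁻¹ * ‖(∑ k ∈ Finset.range (n+1),
          ((1 - A) - (y:ℂ) • δA) ^ k * δA * ((1 - A) - (y:ℂ) • δA) ^ (n - k)) i j‖
        ≤ (((n + 1 : ℕ) : ℝ))⁻¹ * (((n + 1 : ℕ) : ℝ) * (C₁^2 * FVlog.nu δA * r' ^ n)) :=
          mul_le_mul_of_nonneg_left hsum (by positivity)
      _ = C₁^2 * FVlog.nu δA * r' ^ n := by field_simp
  have h00 : (1 - A) - ((0:ℝ):ℂ) • δA = 1 - A := by simp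
  have hsum0 : Summable fun n : ℕ =>
      -(((n + 1 : ℕ) : ℂ))⁻¹ * (((1 - A) - ((0:ℝ):ℂ) • δA) ^ (n+1)) i j := by
    apply Summable.of_norm
    refine Summable.of_nonneg_of_le (fun _ => norm_nonneg _) (fun n => ?_)
      ((summable_geometric_of_lt_one hr0.le hr1).mul_left (C * r))
    rw [norm_mul, norm_neg, norm_inv, Complex.norm_natCast, h00]
    have hle1 : (((n + 1 : ℕ) : ℝ))⁻¹ ≤ 1 := by
      rw [inv_le_one_iff₀]
      right
      exact_mod_cast Nat.succ_le_succ (Nat.zero_le n)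
    calc (((n + 1 : ℕ) : ℝ))⁻¹ * ‖((1 - A) ^ (n+1)) i j‖ ≤ 1 * (C * r ^ (n+1)) :=
          mul_le_mul hle1 (hE (n+1) i j) (norm_nonneg _) zero_le_one
      _ = C * r * r ^ n := by rw [pow_succ]; ring
  have hmain := hasDerivAt_tsum_of_isPreconnected hu Metric.isOpen_ball
    (convex_ball (0:ℝ) ε).isPreconnected hderiv hbound
    (Metric.mem_ball_self hε) hsum0 (Metric.mem_ball_self hε)
  -- identify the sum of the series with the entry of mlog near 0
  have hEq : (fun s : ℝ => mlog (A + (s:ℂ) • δA) i j) =ᶠ[nhds (0:ℝ)]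
      (fun z : ℝ => ∑' n : ℕ,
        -(((n + 1 : ℕ) : ℂ))⁻¹ * (((1 - A) - (z:ℂ) • δA) ^ (n+1)) i j) := by
    filter_upwards [Metric.ball_mem_nhds (0:ℝ) hε] with y hy
    have hM : (1 : Matrix (Fin N) (Fin N) ℂ) - (A + (y:ℂ) • δA) = (1 - A) - (y:ℂ) • δA :=
      sub_add_eq_sub_sub _ _ _
    have hsummable : ∀ i' j', Summable fun n : ℕ =>
        ((((n + 1 : ℕ) : ℂ))⁻¹ • ((1 - A) - (y:ℂ) • δA) ^ (n+1)) i' j' := by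
      intro i' j'
      apply Summable.of_norm
      refine Summable.of_nonneg_of_le (fun _ => norm_nonneg _) (fun n => ?_)
        ((summable_geometric_of_lt_one hr'0.le hr'1).mul_left (C₁ * r'))
      rw [Matrix.smul_apply, smul_eq_mul, norm_mul, norm_inv, Complex.norm_natCast]
      have hle1 : (((n + 1 : ℕ) : ℝ))⁻¹ ≤ 1 := by
        rw [inv_le_one_iff₀]
        right
        exact_mod_cast Nat.succ_le_succ (Nat.zero_le n)
      calc (((n + 1 : ℕ) : ℝ))⁻¹ * ‖(((1 - A) - (y:ℂ) • δA) ^ (n+1)) i' j'‖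
          ≤ 1 * (C₁ * r' ^ (n+1)) := by
            refine mul_le_mul hle1 ?_ (norm_nonneg _) zero_le_one
            exact (FVlog.entry_le_nu _ i' j').trans (hMk y hy (n+1))
        _ = C₁ * r' * r' ^ n := by rw [pow_succ]; ring
    rw [mlog]
    simp only [hM]
    rw [Matrix.neg_apply, FVlog.matrix_tsum_apply hsummable i j, ← tsum_neg]
    refine tsum_congr fun n => ?_
    rw [Matrix.smul_apply, smul_eq_mul]
    ring
  -- identify the derivative value with the integral
  have hcbound : ∀ n : ℕ, ‖(∑ k ∈ Finset.range (n+1),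
      (1 - A) ^ k * δA * (1 - A) ^ (n - k)) i j‖ ≤ C₁^2 * FVlog.nu δA * (n + 1) * r ^ n := by
    intro n
    have hterm : ∀ k ∈ Finset.range (n+1),
        ‖((1 - A) ^ k * δA * (1 - A) ^ (n - k)) i j‖ ≤ C₁^2 * FVlog.nu δA * r ^ n := by
      intro k hk
      rw [Finset.mem_range] at hk
      refine (FVlog.entry_le_nu _ i j).trans ?_
      calc FVlog.nu ((1 - A) ^ k * δA * (1 - A) ^ (n - k))
          ≤ FVlog.nu ((1 - A) ^ k * δA) * FVlog.nu ((1 - A) ^ (n - k)) := FVlog.nu_mul_le _ _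
        _ ≤ (FVlog.nu ((1 - A) ^ k) * FVlog.nu δA) * FVlog.nu ((1 - A) ^ (n - k)) :=
            mul_le_mul_of_nonneg_right (FVlog.nu_mul_le _ _) (FVlog.nu_nonneg _)
        _ ≤ (C₁ * r ^ k * FVlog.nu δA) * (C₁ * r ^ (n - k)) := by
            refine mul_le_mul ?_ (hEnu (n - k)) (FVlog.nu_nonneg _) (by positivity)
            exact mul_le_mul_of_nonneg_right (hEnu k) hδ0
        _ = C₁^2 * FVlog.nu δA * r ^ n := by
            rw [show n = k + (n - k) from by omega, pow_add]
            rw [show k + (n - k) - k = n - k from by omega]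
            ring
    rw [Matrix.sum_apply]
    refine (norm_sum_le _ _).trans ?_
    refine (Finset.sum_le_sum hterm).trans ?_
    rw [Finset.sum_const, Finset.card_range, nsmul_eq_mul]
    push_cast
    ring_nf
    exact le_refl _
  have hint : (∫ t in (0:ℝ)..1,
        ((1 - (t : ℂ) • (1 - A))⁻¹ * δA * (1 - (t : ℂ) • (1 - A))⁻¹) i j)
      = ∫ t in (0:ℝ)..1, ∑' n : ℕ, (t:ℂ)^n *
          ((∑ k ∈ Finset.range (n+1), (1 - A) ^ k * δA * (1 - A) ^ (n - k)) i j) := by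
    refine intervalIntegral.integral_congr fun t ht => ?_
    rw [Set.uIcc_of_le zero_le_one] at ht
    have hz : ‖(t:ℂ)‖ ≤ 1 := by
      rw [Complex.norm_real, Real.norm_eq_abs, abs_of_nonneg ht.1]
      exact ht.2
    have hinv : (1 - (t:ℂ) • (1 - A))⁻¹ = FVlog.Sm (1 - A) (t:ℂ) :=
      Matrix.inv_eq_right_inv
        (FVlog.one_sub_smul_mul_Sm (1 - A) C r (t:ℂ) hC.le hr0 hr1 hE hz)
    rw [hinv]
    exact FVlog.Sm_mul_D_mul_Sm (1 - A) δA C r (t:ℂ) hC.le hr0 hr1 hE hz i j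
  have hval : (∑' n : ℕ, (((n + 1 : ℕ) : ℂ))⁻¹ * ((∑ k ∈ Finset.range (n+1),
        ((1 - A) - ((0:ℝ):ℂ) • δA) ^ k * δA * ((1 - A) - ((0:ℝ):ℂ) • δA) ^ (n - k)) i j))
      = ∫ t in (0:ℝ)..1,
        ((1 - (t : ℂ) • (1 - A))⁻¹ * δA * (1 - (t : ℂ) • (1 - A))⁻¹) i j := by
    rw [hint]
    rw [FVlog.integral_tsum_pow _ (C₁^2 * FVlog.nu δA) r hr0 hr1 hcbound]
    refine tsum_congr fun n => ?_
    rw [h00]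
  rw [← hval]
  exact hmain.congr_of_eventuallyEq hEq
end
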